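/- For the exponential moving averages m_t = β₁ m_{t−1} + (1−β₁) g_t and v_t = β₂ v_{t−1} + (1−β₂) g_t² (elementwise) with m₀ = v₀ = 0, 0 < β₁ < β₂ < 1, and γ := β₁/β₂ < 1, the coordinate-wise normalized update satisfies ‖m_t / √v_t‖² ≤ d · (1−β₁)/((1−β₂)(1−γ)), where the division and square root are elementwise (over coordinates where v_t > 0). -/
import Mathlib

lemma sum_pow_Icc_eq (β : ℝ) (T : ℕ) :
    ∑ j ∈ Finset.Icc 1 T, β ^ (T - j) = ∑ k ∈ Finset.range T, β ^ k := by
  apply Finset.sum_nbij' (fun j => T - j) (fun k => T - k)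
  · intro a ha; simp only [Finset.mem_Icc] at ha; simp only [Finset.mem_range]; omega
  · intro a ha; simp only [Finset.mem_range] at ha; simp only [Finset.mem_Icc]; omega
  · intro a ha; simp only [Finset.mem_Icc] at ha; omega
  · intro a ha; simp only [Finset.mem_range] at ha; omega
  · intro a _; rfl

/-- For the exponential moving averages `m_T = (1−β₁)∑_{j=1}^T β₁^{T−j} g_j` and
`v_T = (1−β₂)∑_{j=1}^T β₂^{T−j} g_j²` (elementwise) with `0 < β₁ < β₂ < 1` and
`γ = β₁/β₂ < 1`, the normalized update satisfies
`‖m_T/√v_T‖² ≤ d(1−β₁)/((1−β₂)(1−γ))` (the quotient is `0` where `v_T = 0`). -/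
theorem normalized_momentum_sq_bound {d : ℕ} (T : ℕ) (hT : 1 ≤ T)
    (g : ℕ → Fin d → ℝ) (β₁ β₂ : ℝ) (h1 : 0 < β₁) (h12 : β₁ < β₂) (h2 : β₂ < 1) :
    ∑ i : Fin d,
        ((1 - β₁) * ∑ j ∈ Finset.Icc 1 T, β₁ ^ (T - j) * g j i) ^ 2
          / ((1 - β₂) * ∑ j ∈ Finset.Icc 1 T, β₂ ^ (T - j) * g j i ^ 2)
      ≤ d * ((1 - β₁) / ((1 - β₂) * (1 - β₁ / β₂))) := by
  have hβ₂0 : (0:ℝ) < β₂ := h1.trans h12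
  have hγ : β₁ / β₂ < 1 := (div_lt_one hβ₂0).2 h12
  have hγ0 : 0 < β₁ / β₂ := div_pos h1 hβ₂0
  set C := (1 - β₁) / ((1 - β₂) * (1 - β₁ / β₂)) with hC
  have hCpos : 0 < C := div_pos (by linarith) (mul_pos (by linarith) (by linarith))
  have key : ∀ i : Fin d,
      ((1 - β₁) * ∑ j ∈ Finset.Icc 1 T, β₁ ^ (T - j) * g j i) ^ 2
          / ((1 - β₂) * ∑ j ∈ Finset.Icc 1 T, β₂ ^ (T - j) * g j i ^ 2) ≤ C := by
    intro i
    set S := ∑ j ∈ Finset.Icc 1 T, β₂ ^ (T - j) * g j i ^ 2 with hS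
    have hSnn : 0 ≤ S :=
      Finset.sum_nonneg fun j _ => mul_nonneg (pow_nonneg hβ₂0.le _) (sq_nonneg _)
    have hBnn : 0 ≤ (1 - β₂) * S := mul_nonneg (by linarith) hSnn
    rcases eq_or_lt_of_le hBnn with h | h
    · rw [← h, div_zero]; exact hCpos.le
    · rw [div_le_iff₀ h]
      have hSpos : 0 < S := by
        nlinarith [h, mul_nonneg hβ₂0.le hSnn]
      -- Cauchy-Schwarz
      have CS : (∑ j ∈ Finset.Icc 1 T, β₁ ^ (T - j) * g j i) ^ 2
          ≤ (∑ j ∈ Finset.Icc 1 T, β₁ ^ (T - j))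
            * (∑ j ∈ Finset.Icc 1 T, β₁ ^ (T - j) * g j i ^ 2) := by
        have hcs := Finset.sum_mul_sq_le_sq_mul_sq (Finset.Icc 1 T)
          (fun j => Real.sqrt (β₁ ^ (T - j)))
          (fun j => Real.sqrt (β₁ ^ (T - j)) * g j i)
        have he1 : ∀ j, Real.sqrt (β₁ ^ (T - j)) * (Real.sqrt (β₁ ^ (T - j)) * g j i)
            = β₁ ^ (T - j) * g j i := by
          intro j
          rw [← mul_assoc, Real.mul_self_sqrt (pow_nonneg h1.le _)]
        have he2 : ∀ j, Real.sqrt (β₁ ^ (T - j)) ^ 2 = β₁ ^ (T - j) := fun j =>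
          Real.sq_sqrt (pow_nonneg h1.le _)
        have he3 : ∀ j, (Real.sqrt (β₁ ^ (T - j)) * g j i) ^ 2
            = β₁ ^ (T - j) * g j i ^ 2 := by
          intro j; rw [mul_pow, he2]
        simp only [he1, he2, he3] at hcs
        exact hcs
      -- geometric sum bound
      have hP1 : (1 - β₁) * (∑ j ∈ Finset.Icc 1 T, β₁ ^ (T - j)) ≤ 1 := by
        rw [sum_pow_Icc_eq]
        have := geom_sum_mul β₁ T
        have hpow : 0 ≤ β₁ ^ T := pow_nonneg h1.le _
        nlinarith [this]
      have hP0 : 0 ≤ ∑ j ∈ Finset.Icc 1 T, β₁ ^ (T - j) :=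
        Finset.sum_nonneg fun j _ => pow_nonneg h1.le _
      have hQ0 : 0 ≤ ∑ j ∈ Finset.Icc 1 T, β₁ ^ (T - j) * g j i ^ 2 :=
        Finset.sum_nonneg fun j _ => mul_nonneg (pow_nonneg h1.le _) (sq_nonneg _)
      have hQS : (∑ j ∈ Finset.Icc 1 T, β₁ ^ (T - j) * g j i ^ 2) ≤ S := by
        apply Finset.sum_le_sum
        intro j _
        exact mul_le_mul_of_nonneg_right (pow_le_pow_left₀ h1.le h12.le _) (sq_nonneg _)
      -- final bound
      have hCB : (1 - β₁) ≤ C * (1 - β₂) := by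
        rw [hC, div_mul_eq_mul_div,
          le_div_iff₀ (mul_pos (by linarith : (0:ℝ) < 1 - β₂) (by linarith : (0:ℝ) < 1 - β₁ / β₂))]
        nlinarith [mul_pos (mul_pos (show (0:ℝ) < 1 - β₁ by linarith)
          (show (0:ℝ) < 1 - β₂ by linarith)) hγ0]
      have step1 : ((1 - β₁) * ∑ j ∈ Finset.Icc 1 T, β₁ ^ (T - j) * g j i) ^ 2
          ≤ (1 - β₁) * ((1 - β₁) * ∑ j ∈ Finset.Icc 1 T, β₁ ^ (T - j))
            * (∑ j ∈ Finset.Icc 1 T, β₁ ^ (T - j) * g j i ^ 2) := by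
        rw [mul_pow]
        nlinarith [CS, sq_nonneg (1 - β₁)]
      have step2 : (1 - β₁) * ((1 - β₁) * ∑ j ∈ Finset.Icc 1 T, β₁ ^ (T - j))
            * (∑ j ∈ Finset.Icc 1 T, β₁ ^ (T - j) * g j i ^ 2)
          ≤ (1 - β₁) * S := by
        nlinarith [mul_le_mul hP1 hQS hQ0 (by norm_num : (0:ℝ) ≤ 1)]
      have step3 : (1 - β₁) * S ≤ C * ((1 - β₂) * S) := by
        rw [← mul_assoc]
        exact mul_le_mul_of_nonneg_right hCB hSnn
      linarith
  calc ∑ i : Fin d,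
        ((1 - β₁) * ∑ j ∈ Finset.Icc 1 T, β₁ ^ (T - j) * g j i) ^ 2
          / ((1 - β₂) * ∑ j ∈ Finset.Icc 1 T, β₂ ^ (T - j) * g j i ^ 2)
      ≤ ∑ _i : Fin d, C := Finset.sum_le_sum fun i _ => key i
    _ = d * C := by simp [Finset.sum_const, nsmul_eq_mul]
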